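/- Assume in addition that K is perfect, i.e. the p-power map x ↦ x^p is bijective on K. Then the additive map K → c₀(ℤ, K)/Im(F − 1) sending r to the class of δ₀r is surjective, and its kernel is exactly K^{++} = {r ∈ K : ‖r‖ < 1}. Consequently it induces an isomorphism of additive groups coker(F − 1 : K⟨F^{±1}⟩ → K⟨F^{±1}⟩) ≅ K/K^{++}. -/

import Mathlib

open Filter

/-- A two-sided sequence `b : ℤ → K` tends to `0` as `|i| → ∞`,
i.e. it lies in `c₀(ℤ, K)`. -/
def IsC0 {K : Type*} [NormedField K] (b : ℤ → K) : Prop :=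
  Tendsto b cofinite (nhds 0)

section Aux

variable {K : Type*} [NontriviallyNormedField K] [IsUltrametricDist K] [CompleteSpace K]

lemma isC0_finite_bad {b : ℤ → K} (hb : IsC0 b) {ε : ℝ} (hε : 0 < ε) :
    {i : ℤ | ¬ ‖b i‖ < ε}.Finite := by
  have h := hb (Metric.ball_mem_nhds (0 : K) hε)
  rw [Filter.mem_map, mem_cofinite] at h
  convert h using 1
  ext i
  simp [mem_ball_zero_iff]

lemma isC0_of_finite {b : ℤ → K} (hb : {i : ℤ | b i ≠ 0}.Finite) : IsC0 b := by
  refine (tendsto_const_nhds : Tendsto (fun _ : ℤ => (0 : K)) cofinite (nhds 0)).congr' ?_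
  rw [Filter.EventuallyEq, Filter.eventually_cofinite]
  exact hb.subset (fun i hi => by simpa [eq_comm] using hi)

lemma isC0_add {a b : ℤ → K} (ha : IsC0 a) (hb : IsC0 b) :
    IsC0 (fun i => a i + b i) := by
  simpa only [IsC0, add_zero] using ha.add hb

lemma isC0_delta (j : ℤ) (c : K) : IsC0 (fun i => if i = j then c else 0) :=
  isC0_of_finite (Set.Finite.subset (Set.finite_singleton j)
    (fun i hi => by by_contra h; simp_all))

lemma isC0_sub {a b : ℤ → K} (ha : IsC0 a) (hb : IsC0 b) :
    IsC0 (fun i => a i - b i) := by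
  simpa only [IsC0, sub_zero] using ha.sub hb

/-- The core analytic lemma: if `a` is a `c₀` sequence uniformly bounded by some `c < 1`,
then `a` is in the image of `F - 1`. -/
lemma lemA (q : ℕ) (hq2 : 2 ≤ q)
    (hadd : ∀ x y : K, (x + y) ^ q = x ^ q + y ^ q)
    (c : ℝ) (hc1 : c < 1) (a : ℤ → K) (ha0 : IsC0 a) (hab : ∀ i, ‖a i‖ ≤ c) :
    ∃ b : ℤ → K, IsC0 b ∧ ∀ i, a i = (b (i - 1)) ^ q - b i := by
  have hq0 : q ≠ 0 := by omega
  have hc0 : 0 ≤ c := le_trans (norm_nonneg _) (hab 0)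
  set g : ℤ → ℕ → K := fun i k => a (i - (k : ℤ)) ^ q ^ k with hg
  have hkq : ∀ k : ℕ, k + 1 ≤ q ^ k := fun k =>
    le_trans (Nat.lt_two_pow_self (n := k)) (Nat.pow_le_pow_left hq2 k)
  have hgle : ∀ i k, ‖g i k‖ ≤ c ^ q ^ k := by
    intro i k
    rw [hg]
    simp only [norm_pow]
    exact pow_le_pow_left₀ (norm_nonneg _) (hab _) _
  have hsum : ∀ i, Summable (g i) := by
    intro i
    refine Summable.of_norm_bounded (g := fun k => c ^ (k + 1)) ?_ ?_
    · simpa [pow_succ'] using (summable_geometric_of_lt_one hc0 hc1).mul_left c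
    · intro k
      exact (hgle i k).trans (pow_le_pow_of_le_one hc0 hc1.le (hkq k))
  set b : ℤ → K := fun i => -∑' k, g i k with hb
  -- the homomorphism x ↦ x ^ q
  set ψ : K →+ K :=
    { toFun := fun x => x ^ q, map_zero' := zero_pow hq0, map_add' := hadd } with hψ
  have hψc : Continuous ψ := by
    simpa [hψ] using (continuous_pow q : Continuous fun x : K => x ^ q)
  refine ⟨b, ?_, ?_⟩
  · -- c₀ property
    rw [IsC0, Metric.tendsto_nhds]
    intro ε hε
    rw [Filter.eventually_cofinite]
    have hε2 : 0 < ε / 2 := by linarith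
    obtain ⟨M, hM⟩ := exists_pow_lt_of_lt_one hε2 hc1
    have hS := isC0_finite_bad ha0 hε2
    obtain ⟨A, hA⟩ := hS.bddBelow
    obtain ⟨B, hB⟩ := hS.bddAbove
    refine (Set.finite_Icc A (B + M)).subset ?_
    intro i hi
    simp only [Set.mem_setOf_eq, not_lt, dist_zero_right] at hi
    by_contra hout
    rw [Set.mem_Icc] at hout
    push_neg at hout
    have key : ∀ k : ℕ, ‖g i k‖ ≤ ε / 2 := by
      intro k
      by_cases hjS : i - (k : ℤ) ∈ {j : ℤ | ¬ ‖a j‖ < ε / 2}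
      · have h1 : A ≤ i - (k : ℤ) := hA hjS
        have h2 : i - (k : ℤ) ≤ B := hB hjS
        have hBM : B + (M : ℤ) < i := hout (by omega)
        have hMk : M ≤ k := by omega
        have hMq : M ≤ q ^ k := le_trans hMk (le_of_lt (lt_of_lt_of_le (Nat.lt_two_pow_self (n := k))
          (Nat.pow_le_pow_left hq2 k)))
        calc ‖g i k‖ ≤ c ^ q ^ k := hgle i k
          _ ≤ c ^ M := pow_le_pow_of_le_one hc0 hc1.le hMq
          _ ≤ ε / 2 := hM.le
      · simp only [Set.mem_setOf_eq, not_not] at hjS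
        have h1 : ‖a (i - (k : ℤ))‖ ^ q ^ k ≤ ‖a (i - (k : ℤ))‖ ^ 1 :=
          pow_le_pow_of_le_one (norm_nonneg _) ((hab _).trans hc1.le)
            (Nat.one_le_two_pow.trans (Nat.pow_le_pow_left hq2 k))
        rw [hg]
        simp only [norm_pow]
        calc ‖a (i - (k : ℤ))‖ ^ q ^ k ≤ ‖a (i - (k : ℤ))‖ ^ 1 := h1
          _ = ‖a (i - (k : ℤ))‖ := pow_one _
          _ ≤ ε / 2 := hjS.le
    have : ‖b i‖ ≤ ε / 2 := by
      rw [hb]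
      simp only [norm_neg]
      exact IsUltrametricDist.norm_tsum_le_of_forall_le_of_nonneg hε2.le key
    linarith
  · -- the equation
    intro i
    have h1 : HasSum (g (i - 1)) (∑' k, g (i - 1) k) := (hsum _).hasSum
    have h2 := h1.map ψ hψc
    have h3 : (⇑ψ ∘ g (i - 1)) = fun k => g i (k + 1) := by
      funext k
      have hidx : i - 1 - (k : ℤ) = i - ((k : ℕ) + 1 : ℕ) := by push_cast; ring
      show (a (i - 1 - (k : ℤ)) ^ q ^ k) ^ q = a (i - ((k + 1 : ℕ) : ℤ)) ^ q ^ (k + 1)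
      rw [← pow_mul, ← pow_succ, hidx]
    rw [h3] at h2
    have h4 : ∑' k, g i (k + 1) = (∑' k, g (i - 1) k) ^ q := h2.tsum_eq
    have h5 : ∑' k, g i k = g i 0 + ∑' k, g i (k + 1) := Summable.tsum_eq_zero_add (hsum i)
    have h6 : g i 0 = a i := by simp [hg]
    have h7 : b (i - 1) ^ q = -((∑' k, g (i - 1) k) ^ q) := by
      rw [hb]
      show (-(∑' k, g (i - 1) k)) ^ q = _
      have := map_neg ψ (∑' k, g (i - 1) k)
      simpa [hψ] using this
    rw [hb] at *
    show a i = (-∑' k, g (i - 1) k) ^ q - (-∑' k, g i k)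
    rw [show ((-∑' k, g (i - 1) k) ^ q : K) = -((∑' k, g (i - 1) k) ^ q) from h7, ← h4, h5, h6]
    ring

/-- `Good q a` : `a` lies in `Im (F - 1) + K·δ₀`. -/
def Good (q : ℕ) (a : ℤ → K) : Prop :=
  ∃ (r : K) (b : ℤ → K), IsC0 b ∧
    ∀ i : ℤ, a i = ((b (i - 1)) ^ q - b i) + (if i = 0 then r else 0)

lemma good_add {q : ℕ} (hadd : ∀ x y : K, (x + y) ^ q = x ^ q + y ^ q)
    {a a' : ℤ → K} (ha : Good q a) (ha' : Good q a') :
    Good q (fun i => a i + a' i) := by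
  obtain ⟨r, b, hb, haeq⟩ := ha
  obtain ⟨r', b', hb', haeq'⟩ := ha'
  refine ⟨r + r', fun i => b i + b' i, isC0_add hb hb', fun i => ?_⟩
  have h1 := haeq i
  have h2 := haeq' i
  have h3 : (if i = 0 then r + r' else 0) =
      (if i = 0 then r else 0) + (if i = 0 then r' else 0) := by split_ifs <;> simp
  show a i + a' i = (b (i - 1) + b' (i - 1)) ^ q - (b i + b' i) + _
  rw [hadd, h3]
  linear_combination h1 + h2

lemma good_single {q : ℕ} (hq0 : q ≠ 0)
    (hadd : ∀ x y : K, (x + y) ^ q = x ^ q + y ^ q)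
    (hroot : ∀ x : K, ∃ y : K, y ^ q = x)
    (j : ℤ) (c : K) : Good q (fun i => if i = j then c else 0) := by
  have hsub : ∀ x y : K, (x - y) ^ q = x ^ q - y ^ q := by
    intro x y
    have := hadd (x - y) y
    rw [sub_add_cancel] at this
    linear_combination -this
  induction j using Int.induction_on generalizing c with
  | zero =>
    exact ⟨c, 0, isC0_of_finite (by simp), fun i => by
      simp [zero_pow hq0]⟩
  | succ n ih =>
    obtain ⟨y, hy⟩ := hroot c
    obtain ⟨r, b, hb, heq⟩ := ih y
    refine ⟨r, fun i => b i + (if i = (n : ℤ) then y else 0),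
      isC0_add hb (isC0_delta (n : ℤ) y), fun i => ?_⟩
    have h1 : (if i - 1 = (n : ℤ) then y else 0) ^ q =
        (if i = (n : ℤ) + 1 then c else 0) := by
      by_cases h : i = (n : ℤ) + 1
      · rw [if_pos (by omega), if_pos h, hy]
      · rw [if_neg (by omega), if_neg h, zero_pow hq0]
    have h2 := heq i
    show (if i = (n : ℤ) + 1 then c else 0) =
      (b (i - 1) + if i - 1 = (n : ℤ) then y else 0) ^ q -
        (b i + if i = (n : ℤ) then y else 0) + (if i = 0 then r else 0)
    rw [hadd, h1]
    linear_combination h2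
  | pred n ih =>
    obtain ⟨r, b, hb, heq⟩ := ih (c ^ q)
    refine ⟨r, fun i => b i - (if i = -(n : ℤ) - 1 then c else 0),
      isC0_sub hb (isC0_delta (-(n : ℤ) - 1) c), fun i => ?_⟩
    have h1 : (if i - 1 = -(n : ℤ) - 1 then c else 0) ^ q =
        (if i = -(n : ℤ) then c ^ q else 0) := by
      by_cases h : i = -(n : ℤ)
      · rw [if_pos (by omega), if_pos h]
      · rw [if_neg (by omega), if_neg h, zero_pow hq0]
    have h2 := heq i
    show (if i = -(n : ℤ) - 1 then c else 0) =
      (b (i - 1) - if i - 1 = -(n : ℤ) - 1 then c else 0) ^ q -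
        (b i - if i = -(n : ℤ) - 1 then c else 0) + (if i = 0 then r else 0)
    rw [hsub, h1]
    linear_combination h2

lemma good_finset {q : ℕ} (hq0 : q ≠ 0)
    (hadd : ∀ x y : K, (x + y) ^ q = x ^ q + y ^ q)
    (hroot : ∀ x : K, ∃ y : K, y ^ q = x)
    (S : Finset ℤ) (a : ℤ → K) : Good q (fun i => if i ∈ S then a i else 0) := by
  induction S using Finset.induction_on with
  | empty =>
    exact ⟨0, 0, isC0_of_finite (by simp), fun i => by simp [zero_pow hq0]⟩
  | insert _ _ hj ih =>
    rename_i j S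
    have heq : (fun i => if i ∈ insert j S then a i else 0) =
        fun i => (if i = j then a i else 0) + (if i ∈ S then a i else 0) := by
      funext i
      by_cases h1 : i = j
      · subst h1
        simp [hj]
      · simp [Finset.mem_insert, h1]
    rw [heq]
    have hδ : Good q (fun i => if i = j then a j else 0) := good_single hq0 hadd hroot j (a j)
    have hδ' : Good q (fun i => if i = j then a i else 0) := by
      have : (fun i => if i = j then a i else 0) = (fun i => if i = j then a j else 0) := by
        funext i
        by_cases h : i = j <;> simp [h]
      rw [this]
      exact hδ
    exact good_add hadd hδ' ih

end Aux

/-- Assume `K` is perfect. The additive map `K → c₀(ℤ, K) / Im(F - 1)` sending `r` to the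
class of `δ₀ r` is surjective, and its kernel is exactly `K^{++} = {r : ‖r‖ < 1}`.
Consequently `coker(F - 1 : K⟨F^{±1}⟩ → K⟨F^{±1}⟩) ≅ K / K^{++}`. -/
theorem coker_FSubOne_eq_K_mod_Kpp
    (p f q : ℕ) (hp : p.Prime) (hf : 1 ≤ f) (hq : q = p ^ f)
    (K : Type*) [NontriviallyNormedField K] [IsUltrametricDist K]
    [CompleteSpace K] [CharP K p]
    (hperf : Function.Bijective fun x : K => x ^ p) :
    (∀ a : ℤ → K, IsC0 a →
      ∃ (r : K) (b : ℤ → K), IsC0 b ∧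
        ∀ i : ℤ, a i = ((b (i - 1)) ^ q - b i) + (if i = 0 then r else 0)) ∧
    (∀ r : K,
      (∃ b : ℤ → K, IsC0 b ∧
        ∀ i : ℤ, (b (i - 1)) ^ q - b i = if i = 0 then r else 0) ↔ ‖r‖ < 1) := by
  haveI : Fact p.Prime := ⟨hp⟩
  have hq2 : 2 ≤ q := by
    rw [hq]
    calc 2 ≤ p := hp.two_le
      _ = p ^ 1 := (pow_one p).symm
      _ ≤ p ^ f := Nat.pow_le_pow_right hp.pos hf
  have hq0 : q ≠ 0 := by omega
  have hadd : ∀ x y : K, (x + y) ^ q = x ^ q + y ^ q := by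
    intro x y
    rw [hq]
    exact add_pow_char_pow x y p f
  have hroot : ∀ x : K, ∃ y : K, y ^ q = x := by
    have hsurj : ∀ n : ℕ, ∀ x : K, ∃ y : K, y ^ p ^ n = x := by
      intro n
      induction n with
      | zero => exact fun x => ⟨x, by simp⟩
      | succ n ih =>
        intro x
        obtain ⟨y, hy⟩ := ih x
        obtain ⟨z, hz⟩ := hperf.2 y
        exact ⟨z, by rw [pow_succ', pow_mul]; simp only at hz; rw [hz, hy]⟩
    intro x
    rw [hq]
    exact hsurj f x
  constructor
  · -- surjectivity
    intro a ha
    have hS : {i : ℤ | ¬ ‖a i‖ < 2⁻¹}.Finite := isC0_finite_bad ha (by norm_num)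
    set S : Finset ℤ := hS.toFinset with hSdef
    have hgood1 : Good q (fun i => if i ∈ S then a i else 0) := good_finset hq0 hadd hroot S a
    have hgood2 : Good q (fun i => if i ∈ S then 0 else a i) := by
      obtain ⟨b, hb, heq⟩ := lemA q hq2 hadd 2⁻¹ (by norm_num)
        (fun i => if i ∈ S then 0 else a i)
        (ha.congr' (by
          rw [Filter.EventuallyEq, Filter.eventually_cofinite]
          refine hS.subset fun i hi => ?_
          simp only [Set.mem_setOf_eq] at hi ⊢
          intro hlt
          apply hi
          have hiS : i ∉ S := by
            rw [hSdef, Set.Finite.mem_toFinset]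
            simp [hlt]
          rw [if_neg hiS]))
        (fun i => by
          show ‖(if i ∈ S then (0 : K) else a i)‖ ≤ 2⁻¹
          by_cases h : i ∈ S
          · simp [h]
          · rw [if_neg h]
            rw [hSdef, Set.Finite.mem_toFinset] at h
            simp only [Set.mem_setOf_eq, not_not] at h
            exact h.le)
      exact ⟨0, b, hb, fun i => by simpa using heq i⟩
    have := good_add hadd hgood1 hgood2
    have hfun : (fun i => (if i ∈ S then a i else 0) + (if i ∈ S then 0 else a i)) = a := by
      funext i
      by_cases h : i ∈ S <;> simp [h]
    rw [hfun] at this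
    exact this
  · -- kernel
    intro r
    constructor
    · rintro ⟨b, hb, heq⟩
      -- negative side: b (-1) = 0
      have hneg : ∀ k : ℕ, (b (-1 - (k : ℤ))) ^ q ^ k = b (-1) := by
        intro k
        induction k with
        | zero => simp
        | succ k ih =>
          have h := heq (-1 - (k : ℤ))
          rw [if_neg (by omega)] at h
          have hstep : b (-1 - (k : ℤ) - 1) ^ q = b (-1 - (k : ℤ)) := by
            linear_combination h
          have hidx : -1 - ((k : ℤ) + 1) = -1 - (k : ℤ) - 1 := by ring
          calc b (-1 - ((k + 1 : ℕ) : ℤ)) ^ q ^ (k + 1)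
              = (b (-1 - (k : ℤ) - 1) ^ q) ^ q ^ k := by
                rw [pow_succ', pow_mul]
                push_cast
                rw [hidx]
            _ = b (-1 - (k : ℤ)) ^ q ^ k := by rw [hstep]
            _ = b (-1) := ih
      have hbm1 : b (-1) = 0 := by
        by_contra h
        have ht : 0 < ‖b (-1)‖ := norm_pos_iff.mpr h
        set ε := min ‖b (-1)‖ 1 with hεdef
        have hε : 0 < ε := lt_min ht one_pos
        have hfin := isC0_finite_bad hb hε
        have hmem : ∀ k : ℕ, (-1 - (k : ℤ)) ∈ {i : ℤ | ¬ ‖b i‖ < ε} := by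
          intro k
          simp only [Set.mem_setOf_eq, not_lt]
          by_contra hcon
          push_neg at hcon
          have h1 : ‖b (-1 - (k : ℤ))‖ ^ q ^ k ≤ ‖b (-1 - (k : ℤ))‖ ^ 1 :=
            pow_le_pow_of_le_one (norm_nonneg _)
              (le_trans hcon.le (min_le_right _ _))
              (Nat.one_le_two_pow.trans (Nat.pow_le_pow_left hq2 k))
          have h2 : ‖b (-1 - (k : ℤ))‖ ^ q ^ k = ‖b (-1)‖ := by
            rw [← norm_pow, hneg k]
          rw [h2, pow_one] at h1
          have := lt_of_le_of_lt h1 hcon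
          have := lt_of_lt_of_le this (min_le_left _ _)
          exact lt_irrefl _ this
        exact (Set.infinite_of_injective_forall_mem
          (f := fun k : ℕ => (-1 - (k : ℤ)))
          (fun x y hxy => by
            have h : -1 - (x : ℤ) = -1 - (y : ℤ) := hxy
            omega) hmem) hfin
      have hr : r = -b 0 := by
        have h := heq 0
        rw [if_pos rfl] at h
        rw [show (0 : ℤ) - 1 = -1 by ring, hbm1, zero_pow hq0] at h
        linear_combination -h
      -- positive side: ‖b 0‖ < 1
      have hpos : ∀ k : ℕ, b (k : ℤ) = (b 0) ^ q ^ k := by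
        intro k
        induction k with
        | zero => simp
        | succ k ih =>
          have h := heq ((k : ℤ) + 1)
          rw [if_neg (by omega)] at h
          have hstep : b ((k : ℤ) + 1) = b ((k : ℤ) + 1 - 1) ^ q := by
            linear_combination -h
          have hidx : (k : ℤ) + 1 - 1 = (k : ℤ) := by ring
          rw [hidx] at hstep
          push_cast
          rw [hstep, ih, ← pow_mul, ← pow_succ]
      have hb0 : ‖b 0‖ < 1 := by
        by_contra h
        push_neg at h
        have hfin := isC0_finite_bad hb one_pos
        have hmem : ∀ k : ℕ, ((k : ℤ)) ∈ {i : ℤ | ¬ ‖b i‖ < 1} := by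
          intro k
          simp only [Set.mem_setOf_eq, not_lt]
          rw [hpos k, norm_pow]
          exact one_le_pow₀ h
        exact (Set.infinite_of_injective_forall_mem
          (f := fun k : ℕ => (k : ℤ))
          (fun x y hxy => by
            have h : (x : ℤ) = (y : ℤ) := hxy
            omega) hmem) hfin
      rw [hr, norm_neg]
      exact hb0
    · intro hr
      obtain ⟨b, hb, heq⟩ := lemA q hq2 hadd ‖r‖ hr
        (fun i => if i = 0 then r else 0)
        (isC0_of_finite (Set.Finite.subset (Set.finite_singleton 0)
          (fun i hi => by by_contra h; simp_all)))
        (fun i => by by_cases h : i = 0 <;> simp [h])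
      exact ⟨b, hb, fun i => (heq i).symm⟩
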